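/- For every t > 0, the running supremum ψ*(t) := sup_{s ≤ t} ψ(s) satisfies ψ*(t) ≤ π^2 ψ(t). -/

import Mathlib

open MeasureTheory Real Set Metric

noncomputable def gg : ℝ → ℝ := fun v => Real.pi ^ 2 * (1 - Real.cos v) - min 2 (v ^ 2 / 2)

lemma gg_cont : Continuous gg := by
  unfold gg; fun_prop

lemma gg_even (v : ℝ) : gg (-v) = gg v := by
  simp [gg]

lemma one_sub_cos_le (v : ℝ) : 1 - Real.cos v ≤ min 2 (v ^ 2 / 2) := by
  refine le_min (by nlinarith [Real.neg_one_le_cos v]) ?_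
  have h : Real.sin (v / 2) ^ 2 = 1 / 2 - Real.cos (2 * (v / 2)) / 2 := Real.sin_sq_eq_half_sub _
  have h2 : Real.sin (v / 2) ^ 2 ≤ (v / 2) ^ 2 := Real.sin_sq_le_sq
  rw [show 2 * (v / 2) = v by ring] at h
  nlinarith

lemma one_sub_cos_ge (u : ℝ) (h0 : 0 ≤ u) (h : u ≤ 3 / 2) : u ^ 2 / 3 ≤ 1 - Real.cos u := by
  have h : Real.sin (u / 2) ^ 2 = 1 / 2 - Real.cos (2 * (u / 2)) / 2 := Real.sin_sq_eq_half_sub _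
  rw [show 2 * (u / 2) = u by ring] at h
  rcases eq_or_lt_of_le h0 with h0 | h0
  · simp [← h0]
  have hs : 55 / 64 * (u / 2) ≤ Real.sin (u / 2) := by
    have h4 : 4 * u ^ 2 ≤ 9 := by nlinarith
    have := Real.sin_gt_sub_cube (x := u / 2) (by linarith)
    nlinarith [mul_nonneg h0.le (sub_nonneg.2 h4)]
  nlinarith [Real.sin_nonneg_of_nonneg_of_le_pi (x := u/2) (by linarith)
    (by nlinarith [Real.pi_gt_three])]

lemma sub_sin_ge (b : ℝ) (h0 : 0 ≤ b) (h : b ≤ 3 / 2) : b ^ 3 / 9 ≤ b - Real.sin b := by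
  have h1 : (∫ u in (0:ℝ)..b, (1 - Real.cos u)) = b - Real.sin b := by
    rw [intervalIntegral.integral_sub intervalIntegrable_const
      (Real.continuous_cos.intervalIntegrable _ _), intervalIntegral.integral_const,
      integral_cos]
    simp
  have h2 : (∫ u in (0:ℝ)..b, u ^ 2 / 3) = b ^ 3 / 9 := by
    simp_rw [div_eq_mul_inv]
    rw [intervalIntegral.integral_mul_const, integral_pow]
    ring
  rw [← h1, ← h2]
  exact intervalIntegral.integral_mono_on h0 (Continuous.intervalIntegrable (by fun_prop) _ _)
    ((continuous_const.sub Real.continuous_cos).intervalIntegrable _ _)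
    (fun x hx => one_sub_cos_ge x hx.1 (le_trans hx.2 h))
lemma min_intble (a b : ℝ) : IntervalIntegrable (fun v => min 2 (v ^ 2 / 2)) volume a b :=
  Continuous.intervalIntegrable (by fun_prop) _ _

lemma Phi_eq (b : ℝ) : (∫ v in (0:ℝ)..b, gg v)
    = Real.pi ^ 2 * (b - Real.sin b) - ∫ v in (0:ℝ)..b, min 2 (v ^ 2 / 2) := by
  unfold gg
  rw [intervalIntegral.integral_sub (Continuous.intervalIntegrable (by fun_prop) _ _) (min_intble _ _),
    intervalIntegral.integral_const_mul,
    intervalIntegral.integral_sub intervalIntegrable_const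
      (Real.continuous_cos.intervalIntegrable _ _),
    intervalIntegral.integral_const, integral_cos]
  simp

lemma Phi_nonneg (b : ℝ) (hb : 0 ≤ b) : 0 ≤ ∫ v in (0:ℝ)..b, gg v := by
  rw [Phi_eq]
  have hpi : (3:ℝ) < Real.pi := Real.pi_gt_three
  rcases le_or_gt b (3/2) with hb2 | hb2
  · have h1 : (∫ v in (0:ℝ)..b, min 2 (v ^ 2 / 2)) ≤ b ^ 3 / 6 := by
      have : (∫ v in (0:ℝ)..b, v ^ 2 / 2) = b ^ 3 / 6 := by
        simp_rw [div_eq_mul_inv]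
        rw [intervalIntegral.integral_mul_const, integral_pow]; ring
      rw [← this]
      exact intervalIntegral.integral_mono_on hb (min_intble _ _)
        (Continuous.intervalIntegrable (by fun_prop) _ _)
        (fun x _ => min_le_right _ _)
    have h2 := sub_sin_ge b hb hb2
    have h3 : Real.pi ^ 2 * (b ^ 3 / 9) ≤ Real.pi ^ 2 * (b - Real.sin b) :=
      mul_le_mul_of_nonneg_left h2 (sq_nonneg Real.pi)
    have h4 : 9 * (b ^ 3 / 9) ≤ Real.pi ^ 2 * (b ^ 3 / 9) :=
      mul_le_mul_of_nonneg_right (by nlinarith) (by positivity)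
    nlinarith [pow_nonneg hb 3]
  · have h1 : (∫ v in (0:ℝ)..b, min 2 (v ^ 2 / 2)) ≤ 2 * b := by
      have : (∫ v in (0:ℝ)..b, (2:ℝ)) = 2 * b := by
        rw [intervalIntegral.integral_const]; simp [mul_comm]
      rw [← this]
      exact intervalIntegral.integral_mono_on hb (min_intble _ _)
        intervalIntegrable_const (fun x _ => min_le_left _ _)
    have h2 : Real.sin b ≤ 1 := Real.sin_le_one b
    have h3 : 9 * (b - 1) ≤ Real.pi ^ 2 * (b - Real.sin b) :=
      mul_le_mul (by nlinarith) (by linarith) (by linarith) (by positivity)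
    linarith
lemma lint_neg_le (T : Set ℝ) (f : ℝ → ℝ) (hint : IntegrableOn f T volume)
    (h : 0 ≤ ∫ y in T, f y) :
    ∫⁻ y in T, ENNReal.ofReal (-f y) ≤ ∫⁻ y in T, ENNReal.ofReal (f y) := by
  have hA : ∫⁻ y in T, ENNReal.ofReal (f y) ≠ ⊤ :=
    ne_top_of_le_ne_top hint.2.ne (lintegral_mono fun y => Real.ofReal_le_enorm _)
  have hB : ∫⁻ y in T, ENNReal.ofReal (-f y) ≠ ⊤ :=
    ne_top_of_le_ne_top hint.2.ne (lintegral_mono fun y => by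
      rw [show ‖f y‖ₑ = ‖-f y‖ₑ by rw [enorm_neg]]
      exact Real.ofReal_le_enorm _)
  rw [integral_eq_lintegral_pos_part_sub_lintegral_neg_part hint] at h
  exact (ENNReal.toReal_le_toReal hB hA).1 (by linarith)

lemma key_interval (f : ℝ → ℝ) (hc : Continuous f)
    (hΦ : ∀ b, 0 ≤ b → 0 ≤ ∫ v in (0:ℝ)..b, f v)
    (S : Set ℝ) (hSsub : S ⊆ Ioi 0)
    (hSdc : ∀ y ∈ S, ∀ z, 0 < z → z ≤ y → z ∈ S)
    (hIoi : ¬ BddAbove S → IntegrableOn f (Ioi 0) volume) :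
    ∫⁻ y in S, ENNReal.ofReal (-f y) ≤ ∫⁻ y in S, ENNReal.ofReal (f y) := by
  rcases eq_empty_or_nonempty S with rfl | hne
  · simp
  by_cases hbdd : BddAbove S
  · set b := sSup S with hb
    have hbpos : 0 < b := lt_of_lt_of_le (hSsub hne.some_mem) (le_csSup hbdd hne.some_mem)
    have hsub1 : Ioo 0 b ⊆ S := by
      intro y hy
      obtain ⟨z, hz, hyz⟩ := exists_lt_of_lt_csSup hne hy.2
      exact hSdc z hz y hy.1 hyz.le
    have hsub2 : S ⊆ Ioc 0 b := fun y hy => ⟨hSsub hy, le_csSup hbdd hy⟩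
    have hae : S =ᵐ[volume] Ioo 0 b := by
      rw [ae_eq_set]
      constructor
      · refine measure_mono_null (fun y hy => ?_) (measure_singleton b)
        rcases hy with ⟨hyS, hyn⟩
        have h2 := hsub2 hyS
        have : ¬ y < b → y = b := fun h => le_antisymm h2.2 (not_lt.1 h)
        simp only [mem_Ioo, not_and] at hyn
        simp [this (fun hlt => (hyn h2.1 hlt).elim)]
      · rw [diff_eq_empty.2 hsub1]; simp
    rw [setLIntegral_congr hae, setLIntegral_congr hae]
    refine lint_neg_le _ f ((hc.integrableOn_Icc).mono_set Ioo_subset_Icc_self) ?_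
    rw [← integral_Ioc_eq_integral_Ioo, ← intervalIntegral.integral_of_le hbpos.le]
    exact hΦ b hbpos.le
  · have hSeq : S = Ioi 0 := by
      refine Subset.antisymm hSsub (fun y hy => ?_)
      obtain ⟨z, hz, hyz⟩ := not_bddAbove_iff.1 hbdd y
      exact hSdc z hz y hy hyz.le
    rw [hSeq]
    have hfi := hIoi hbdd
    refine lint_neg_le _ f hfi ?_
    have htd := MeasureTheory.intervalIntegral_tendsto_integral_Ioi 0 hfi Filter.tendsto_id
    exact ge_of_tendsto htd (Filter.eventually_atTop.2 ⟨0, fun b hb => hΦ b hb⟩)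
lemma layer_repr (q : ℝ → ℝ) (hqm : Measurable q) (f : ℝ → ℝ) (hf : Measurable f) :
    ∫⁻ y in Ioi (0:ℝ), ENNReal.ofReal (f y) * ENNReal.ofReal (q y)
      = ∫⁻ l in Ioi (0:ℝ), ∫⁻ y in {y | l < q y} ∩ Ioi 0, ENNReal.ofReal (f y) := by
  set F : ℝ → ℝ → ENNReal := fun y l =>
    ({p : ℝ × ℝ | p.2 < q p.1}.indicator (fun p => ENNReal.ofReal (f p.1))) (y, l) with hF
  have hmeas : Measurable (Function.uncurry F) := by
    have hset : MeasurableSet {p : ℝ × ℝ | p.2 < q p.1} :=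
      measurableSet_lt measurable_snd (hqm.comp measurable_fst)
    exact (Measurable.indicator ((ENNReal.measurable_ofReal).comp (hf.comp measurable_fst)) hset)
  have step1 : ∀ y : ℝ, ∫⁻ l in Ioi (0:ℝ), F y l
      = ENNReal.ofReal (f y) * ENNReal.ofReal (q y) := by
    intro y
    have he : (fun l => F y l) = (Iio (q y)).indicator (fun _ => ENNReal.ofReal (f y)) := by
      funext l
      by_cases h : l < q y <;> simp [hF, Set.indicator, h]
    rw [he, lintegral_indicator measurableSet_Iio, Measure.restrict_restrict measurableSet_Iio,
      setLIntegral_const, Iio_inter_Ioi, Real.volume_Ioo, sub_zero]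
  have step3 : ∀ l : ℝ, ∫⁻ y in Ioi (0:ℝ), F y l
      = ∫⁻ y in {y | l < q y} ∩ Ioi 0, ENNReal.ofReal (f y) := by
    intro l
    have he : (fun y => F y l) = {y : ℝ | l < q y}.indicator (fun y => ENNReal.ofReal (f y)) := by
      funext y
      by_cases h : l < q y <;> simp [hF, Set.indicator, h]
    have hset : MeasurableSet {y : ℝ | l < q y} := measurableSet_lt measurable_const hqm
    rw [he, lintegral_indicator hset, Measure.restrict_restrict hset]
  calc ∫⁻ y in Ioi (0:ℝ), ENNReal.ofReal (f y) * ENNReal.ofReal (q y)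
      = ∫⁻ y in Ioi (0:ℝ), ∫⁻ l in Ioi (0:ℝ), F y l := by
        refine lintegral_congr fun y => (step1 y).symm
    _ = ∫⁻ l in Ioi (0:ℝ), ∫⁻ y in Ioi (0:ℝ), F y l :=
        lintegral_lintegral_swap hmeas.aemeasurable
    _ = ∫⁻ l in Ioi (0:ℝ), ∫⁻ y in {y | l < q y} ∩ Ioi 0, ENNReal.ofReal (f y) :=
        lintegral_congr fun l => step3 l

lemma oneD (f q : ℝ → ℝ) (hc : Continuous f)
    (hΦ : ∀ b, 0 ≤ b → 0 ≤ ∫ v in (0:ℝ)..b, f v)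
    (hqm : Measurable q) (hq0 : ∀ y ∈ Ioi (0:ℝ), 0 ≤ q y)
    (hq_anti : AntitoneOn q (Ioi 0))
    (hint : IntegrableOn (fun y => f y * q y) (Ioi 0) volume) :
    0 ≤ ∫ y in Ioi (0:ℝ), f y * q y := by
  have key : ∀ l ∈ Ioi (0:ℝ),
      ∫⁻ y in {y | l < q y} ∩ Ioi 0, ENNReal.ofReal (-f y)
        ≤ ∫⁻ y in {y | l < q y} ∩ Ioi 0, ENNReal.ofReal (f y) := by
    intro l hl
    refine key_interval f hc hΦ _ inter_subset_right ?_ ?_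
    · rintro y ⟨hy1, hy2⟩ z hz1 hz2
      exact ⟨lt_of_lt_of_le hy1 (hq_anti (mem_Ioi.2 hz1) hy2 hz2), hz1⟩
    · intro hbdd
      have hall : ∀ y ∈ Ioi (0:ℝ), l < q y := by
        intro y hy
        obtain ⟨z, hz, hyz⟩ := not_bddAbove_iff.1 hbdd y
        exact lt_of_lt_of_le hz.1 (hq_anti hy hz.2 hyz.le)
      refine Integrable.mono' ((hint.norm).div_const l) hc.aestronglyMeasurable ?_
      rw [ae_restrict_iff' measurableSet_Ioi]
      refine Filter.Eventually.of_forall fun y hy => ?_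
      rw [le_div_iff₀ hl, Real.norm_eq_abs, Real.norm_eq_abs, abs_mul,
        abs_of_nonneg (hq0 y hy)]
      exact mul_le_mul_of_nonneg_left ((hall y hy).le) (abs_nonneg _)
  have main : ∫⁻ y in Ioi (0:ℝ), ENNReal.ofReal (-f y) * ENNReal.ofReal (q y)
      ≤ ∫⁻ y in Ioi (0:ℝ), ENNReal.ofReal (f y) * ENNReal.ofReal (q y) := by
    rw [layer_repr q hqm f hc.measurable, layer_repr q hqm (fun y => -f y) hc.neg.measurable]
    refine lintegral_mono_ae ((ae_restrict_iff' measurableSet_Ioi).2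
      (Filter.Eventually.of_forall fun l hl => key l hl))
  have hmul1 : ∀ᵐ y ∂(volume.restrict (Ioi (0:ℝ))),
      ENNReal.ofReal (f y * q y) = ENNReal.ofReal (f y) * ENNReal.ofReal (q y) := by
    rw [ae_restrict_iff' measurableSet_Ioi]
    refine Filter.Eventually.of_forall fun y hy => ?_
    rw [mul_comm (f y) (q y), ENNReal.ofReal_mul (hq0 y hy), mul_comm]
  have hmul2 : ∀ᵐ y ∂(volume.restrict (Ioi (0:ℝ))),
      ENNReal.ofReal (-(f y * q y)) = ENNReal.ofReal (-f y) * ENNReal.ofReal (q y) := by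
    rw [ae_restrict_iff' measurableSet_Ioi]
    refine Filter.Eventually.of_forall fun y hy => ?_
    rw [show -(f y * q y) = q y * (-f y) by ring, ENNReal.ofReal_mul (hq0 y hy), mul_comm]
  have hA : ∫⁻ y in Ioi (0:ℝ), ENNReal.ofReal (f y) * ENNReal.ofReal (q y) ≠ ⊤ := by
    rw [← lintegral_congr_ae hmul1]
    exact ne_top_of_le_ne_top hint.2.ne (lintegral_mono fun y => Real.ofReal_le_enorm _)
  rw [integral_eq_lintegral_pos_part_sub_lintegral_neg_part hint,
    lintegral_congr_ae hmul1, lintegral_congr_ae hmul2]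
  exact sub_nonneg.2 (ENNReal.toReal_mono hA main)
lemma coord_abs_le_norm {d : ℕ} (x : EuclideanSpace ℝ (Fin d)) (i : Fin d) : |x i| ≤ ‖x‖ := by
  rw [EuclideanSpace.norm_eq, ← Real.sqrt_sq_eq_abs]
  refine Real.sqrt_le_sqrt ?_
  have := Finset.single_le_sum (f := fun j => ‖x j‖ ^ 2) (fun j _ => sq_nonneg _)
    (Finset.mem_univ i)
  simpa [Real.norm_eq_abs, sq_abs] using this

lemma min_le_bound (r u nx : ℝ) (hu : |u| ≤ nx) :
    min 2 ((r * u) ^ 2 / 2) ≤ max 2 (r ^ 2 / 2) * min 1 (nx ^ 2) := by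
  rcases le_or_gt 1 (nx ^ 2) with h | h
  · rw [min_eq_left h]
    calc min 2 ((r * u) ^ 2 / 2) ≤ 2 := min_le_left _ _
    _ ≤ max 2 (r ^ 2 / 2) * 1 := by simpa using le_max_left 2 (r ^ 2 / 2)
  · have hn : min 1 (nx ^ 2) = nx ^ 2 := min_eq_right h.le
    rw [hn]
    have h1 : u ^ 2 ≤ nx ^ 2 := by
      have h2 := pow_le_pow_left₀ (abs_nonneg u) hu 2
      rwa [sq_abs] at h2
    calc min 2 ((r * u) ^ 2 / 2) ≤ (r * u) ^ 2 / 2 := min_le_right _ _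
    _ = r ^ 2 / 2 * u ^ 2 := by ring
    _ ≤ max 2 (r ^ 2 / 2) * nx ^ 2 := by
        refine mul_le_mul (le_max_right _ _) h1 (sq_nonneg _) ?_
        exact le_trans (by norm_num) (le_max_left 2 (r ^ 2 / 2))
lemma inner_nonneg (t : ℝ) (ht : 0 < t) (c : ℝ) (hc : 0 ≤ c) (ρ' : ℝ → ℝ)
    (hρ'm : Measurable ρ') (hρ'0 : ∀ r, 0 ≤ ρ' r) (hρ'anti : AntitoneOn ρ' (Ioi 0))
    (hz : Integrable (fun a : ℝ => gg (t * a) * ρ' (Real.sqrt (a ^ 2 + c)))) :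
    0 ≤ ∫ a : ℝ, gg (t * a) * ρ' (Real.sqrt (a ^ 2 + c)) := by
  set f₀ : ℝ → ℝ := fun r => gg (t * r) * ρ' (Real.sqrt (r ^ 2 + c)) with hf₀
  have heven : ∀ a : ℝ, f₀ |a| = f₀ a := by
    intro a
    rcases le_or_gt 0 a with h | h
    · rw [abs_of_nonneg h]
    · rw [abs_of_neg h, hf₀]
      simp only
      rw [show t * -a = -(t * a) by ring, gg_even, show (-a : ℝ) ^ 2 = a ^ 2 by ring]
  have h2 : ∫ a : ℝ, f₀ a = 2 * ∫ a in Ioi (0:ℝ), f₀ a := by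
    rw [show (∫ a : ℝ, f₀ a) = ∫ a : ℝ, f₀ |a| from integral_congr_ae
      (Filter.Eventually.of_forall fun a => (heven a).symm), integral_comp_abs]
  rw [h2]
  have hpos : 0 ≤ ∫ a in Ioi (0:ℝ), f₀ a := by
    refine oneD (fun r => gg (t * r)) (fun r => ρ' (Real.sqrt (r ^ 2 + c)))
      (gg_cont.comp (continuous_const.mul continuous_id)) ?_
      (hρ'm.comp (Continuous.measurable (by fun_prop))) (fun y _ => hρ'0 _) ?_ ?_
    · intro b hb
      rw [intervalIntegral.integral_comp_mul_left gg ht.ne']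
      have := Phi_nonneg (t * b) (by positivity)
      rw [mul_zero]
      rw [smul_eq_mul]
      positivity
    · intro a ha b hb hab
      have h1 : Real.sqrt (a ^ 2 + c) ∈ Ioi (0:ℝ) := by
        rw [mem_Ioi, Real.sqrt_pos]
        have := mem_Ioi.1 ha
        nlinarith
      have h2 : Real.sqrt (b ^ 2 + c) ∈ Ioi (0:ℝ) := by
        rw [mem_Ioi, Real.sqrt_pos]
        have := mem_Ioi.1 hb
        nlinarith
      refine hρ'anti h1 h2 (Real.sqrt_le_sqrt ?_)
      have := mem_Ioi.1 ha
      nlinarith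
    · exact hz.integrableOn
  linarith
lemma crux (n : ℕ) (t : ℝ) (ht : 0 < t) (ρ' : ℝ → ℝ) (hρ'm : Measurable ρ')
    (hρ'0 : ∀ r, 0 ≤ ρ' r) (hρ'anti : AntitoneOn ρ' (Ioi 0))
    (hggint : Integrable (fun x : EuclideanSpace ℝ (Fin (n+1)) => gg (t * x 0) * ρ' ‖x‖)) :
    0 ≤ ∫ x : EuclideanSpace ℝ (Fin (n+1)), gg (t * x 0) * ρ' ‖x‖ := by
  set F : EuclideanSpace ℝ (Fin (n+1)) → ℝ := fun x => gg (t * x 0) * ρ' ‖x‖ with hF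
  set e₁ := (MeasurableEquiv.toLp 2 (Fin (n+1) → ℝ)).symm with he₁
  set e₂ := MeasurableEquiv.piFinSuccAbove (fun _ : Fin (n+1) => ℝ) 0 with he₂
  have mp1 : MeasurePreserving e₁.symm :=
    (EuclideanSpace.volume_preserving_symm_measurableEquiv_toLp (Fin (n+1))).symm
  have mp2 : MeasurePreserving e₂.symm :=
    (MeasureTheory.volume_preserving_piFinSuccAbove (fun _ : Fin (n+1) => ℝ) 0).symm
  set G2 : ℝ × (Fin n → ℝ) → ℝ := fun p =>
    gg (t * p.1) * ρ' (Real.sqrt (p.1 ^ 2 + ∑ j, (p.2 j) ^ 2)) with hG2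
  have hcomp : ∀ p : ℝ × (Fin n → ℝ), F (e₁.symm (e₂.symm p)) = G2 p := by
    intro p
    have hco : ∀ i, (e₁.symm (e₂.symm p)) i = (e₂.symm p) i := fun i => rfl
    have h0 : (e₂.symm p) 0 = p.1 := by
      simp [he₂, MeasurableEquiv.piFinSuccAbove, Fin.insertNth_apply_same]
    have hsum : ∑ i, ((e₂.symm p) i) ^ 2 = p.1 ^ 2 + ∑ j, (p.2 j) ^ 2 := by
      rw [Fin.sum_univ_succAbove (fun i => ((e₂.symm p) i) ^ 2) 0, h0]
      simp [he₂, MeasurableEquiv.piFinSuccAbove]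
    have hnorm : ‖e₁.symm (e₂.symm p)‖ = Real.sqrt (p.1 ^ 2 + ∑ j, (p.2 j) ^ 2) := by
      rw [EuclideanSpace.norm_eq]
      simp_rw [Real.norm_eq_abs, sq_abs]
      have hq : (∑ i, ((e₁.symm (e₂.symm p)) i) ^ 2) = ∑ i, ((e₂.symm p) i) ^ 2 := rfl
      rw [hq, hsum]
    rw [hF, hG2]
    simp only
    rw [hnorm, hco 0, h0]
  have hIpi : Integrable (F ∘ e₁.symm) :=
    (mp1.integrable_comp_emb e₁.symm.measurableEmbedding).2 hggint
  have hIprod : Integrable ((F ∘ e₁.symm) ∘ e₂.symm) :=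
    (mp2.integrable_comp_emb e₂.symm.measurableEmbedding).2 hIpi
  have hG2int : Integrable G2 := by
    refine hIprod.congr (Filter.Eventually.of_forall fun p => ?_)
    exact (hcomp p)
  have htrans : ∫ x, F x = ∫ p : ℝ × (Fin n → ℝ), G2 p := by
    rw [← mp1.integral_comp e₁.symm.measurableEmbedding F,
      ← mp2.integral_comp e₂.symm.measurableEmbedding (fun y => F (e₁.symm y))]
    exact integral_congr_ae (Filter.Eventually.of_forall fun p => hcomp p)
  rw [htrans]
  have hG2int' : Integrable G2 (volume.prod volume) := by
    rwa [← Measure.volume_eq_prod]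
  rw [show (volume : Measure (ℝ × (Fin n → ℝ))) = volume.prod volume from Measure.volume_eq_prod ℝ (Fin n → ℝ)]
  rw [integral_prod_symm G2 hG2int']
  refine integral_nonneg_of_ae ?_
  filter_upwards [hG2int'.prod_left_ae] with z hz
  exact inner_nonneg t ht (∑ j, (z j) ^ 2) (by positivity) ρ' hρ'm hρ'0 hρ'anti hz
theorem stmt12 (d : ℕ) (hd : 1 ≤ d) (ψ : ℝ → ℝ) (ρ : ℝ → ℝ)
    (hρ0 : ∀ t, 0 < t → 0 ≤ ρ t)
    (hρmono : ∀ s t, 0 < s → s ≤ t → ρ t ≤ ρ s)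
    (hlevy : Integrable (fun x : EuclideanSpace ℝ (Fin d) => min 1 (‖x‖ ^ 2) * ρ ‖x‖))
    (hψ : ∀ ξ : EuclideanSpace ℝ (Fin d),
      ψ ‖ξ‖ = ∫ x : EuclideanSpace ℝ (Fin d),
        (1 - Real.cos (inner ℝ ξ x : ℝ)) * ρ ‖x‖) :
    ∀ t : ℝ, 0 < t → ∀ s : ℝ, 0 ≤ s → s ≤ t → ψ s ≤ Real.pi ^ 2 * ψ t := by
  obtain ⟨n, rfl⟩ : ∃ n, d = n + 1 := ⟨d - 1, (Nat.succ_pred_eq_of_pos hd).symm⟩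
  intro t ht s hs hst
  set ρ' : ℝ → ℝ := fun r => max 0 (ρ (Real.exp (Real.log r))) with hρ'def
  have hρ'eq : ∀ r : ℝ, 0 < r → ρ' r = ρ r := by
    intro r hr
    rw [hρ'def]
    simp only
    rw [Real.exp_log hr]
    exact max_eq_right (hρ0 r hr)
  have hρ'm : Measurable ρ' := by
    have hanti : Antitone (fun u : ℝ => ρ (Real.exp u)) := fun u v huv =>
      hρmono _ _ (Real.exp_pos u) (Real.exp_le_exp.2 huv)
    exact measurable_const.max (hanti.measurable.comp Real.measurable_log)
  have hρ'0 : ∀ r, 0 ≤ ρ' r := fun r => le_max_left _ _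
  have hρ'anti : AntitoneOn ρ' (Ioi 0) := by
    intro a ha b hb hab
    rw [hρ'eq a ha, hρ'eq b hb]
    exact hρmono a b ha hab
  have h0vol : (volume : Measure (EuclideanSpace ℝ (Fin (n+1)))) {0} = 0 := measure_singleton 0
  have haeρ : ∀ᵐ x : EuclideanSpace ℝ (Fin (n+1)) ∂volume, ρ ‖x‖ = ρ' ‖x‖ := by
    refine measure_mono_null (fun x hx => ?_) h0vol
    simp only [mem_setOf_eq] at hx
    rw [mem_singleton_iff]
    by_contra hne
    exact hx ((hρ'eq ‖x‖ (norm_pos_iff.2 hne)).symm)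
  have hψ' : ∀ r : ℝ, 0 ≤ r → ψ r = ∫ x : EuclideanSpace ℝ (Fin (n+1)),
      (1 - Real.cos (r * x 0)) * ρ' ‖x‖ := by
    intro r hr
    have h1 := hψ (EuclideanSpace.single (0 : Fin (n+1)) r)
    rw [EuclideanSpace.norm_single, Real.norm_eq_abs, abs_of_nonneg hr] at h1
    rw [h1]
    refine integral_congr_ae ?_
    filter_upwards [haeρ] with x hx
    rw [EuclideanSpace.inner_single_left, hx]
    norm_num
  have hx0cont : Continuous (fun x : EuclideanSpace ℝ (Fin (n+1)) => x 0) :=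
    (EuclideanSpace.proj (0 : Fin (n+1))).continuous
  have hmeasρ : Measurable (fun x : EuclideanSpace ℝ (Fin (n+1)) => ρ' ‖x‖) :=
    hρ'm.comp measurable_norm
  have hlevy' : Integrable (fun x : EuclideanSpace ℝ (Fin (n+1)) => min 1 (‖x‖ ^ 2) * ρ' ‖x‖) :=
    hlevy.congr (by filter_upwards [haeρ] with x hx; rw [hx])
  have hbound : ∀ r : ℝ, Integrable
      (fun x : EuclideanSpace ℝ (Fin (n+1)) => min 2 ((r * x 0) ^ 2 / 2) * ρ' ‖x‖) := by
    intro r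
    have hcm : Continuous (fun x : EuclideanSpace ℝ (Fin (n+1)) => min 2 ((r * x 0) ^ 2 / 2)) :=
      continuous_const.min (((continuous_const.mul hx0cont).pow 2).div_const 2)
    refine Integrable.mono' (hlevy'.const_mul (max 2 (r ^ 2 / 2)))
      ((hcm.measurable.mul hmeasρ).aestronglyMeasurable)
      (Filter.Eventually.of_forall fun x => ?_)
    have hmn : (0:ℝ) ≤ min 2 ((r * x 0) ^ 2 / 2) := le_min (by norm_num) (by positivity)
    rw [Real.norm_eq_abs, abs_of_nonneg (mul_nonneg hmn (hρ'0 _))]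
    calc min 2 ((r * x 0) ^ 2 / 2) * ρ' ‖x‖
        ≤ (max 2 (r ^ 2 / 2) * min 1 (‖x‖ ^ 2)) * ρ' ‖x‖ :=
          mul_le_mul_of_nonneg_right (min_le_bound r (x 0) ‖x‖ (coord_abs_le_norm x 0)) (hρ'0 _)
      _ = max 2 (r ^ 2 / 2) * (min 1 (‖x‖ ^ 2) * ρ' ‖x‖) := by ring
  have hK : ∀ r : ℝ, Integrable
      (fun x : EuclideanSpace ℝ (Fin (n+1)) => (1 - Real.cos (r * x 0)) * ρ' ‖x‖) := by
    intro r
    have hcm : Continuous (fun x : EuclideanSpace ℝ (Fin (n+1)) => 1 - Real.cos (r * x 0)) :=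
      continuous_const.sub (Real.continuous_cos.comp (continuous_const.mul hx0cont))
    refine Integrable.mono' (hbound r)
      ((hcm.measurable.mul hmeasρ).aestronglyMeasurable)
      (Filter.Eventually.of_forall fun x => ?_)
    have hc1 : (0:ℝ) ≤ 1 - Real.cos (r * x 0) := by nlinarith [Real.cos_le_one (r * x 0)]
    rw [Real.norm_eq_abs, abs_of_nonneg (mul_nonneg hc1 (hρ'0 _))]
    exact mul_le_mul_of_nonneg_right (one_sub_cos_le (r * x 0)) (hρ'0 _)
  have step5 : ψ s ≤ ∫ x : EuclideanSpace ℝ (Fin (n+1)), min 2 ((t * x 0) ^ 2 / 2) * ρ' ‖x‖ := by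
    rw [hψ' s hs]
    refine integral_mono (hK s) (hbound t) fun x => ?_
    refine mul_le_mul_of_nonneg_right ?_ (hρ'0 _)
    refine (one_sub_cos_le (s * x 0)).trans (min_le_min le_rfl ?_)
    have h1 : s ^ 2 ≤ t ^ 2 := pow_le_pow_left₀ hs hst 2
    have h2 : s ^ 2 * (x 0) ^ 2 ≤ t ^ 2 * (x 0) ^ 2 :=
      mul_le_mul_of_nonneg_right h1 (sq_nonneg _)
    nlinarith
  have hsplit : (fun x : EuclideanSpace ℝ (Fin (n+1)) => gg (t * x 0) * ρ' ‖x‖)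
      = fun x => Real.pi ^ 2 * ((1 - Real.cos (t * x 0)) * ρ' ‖x‖)
        - min 2 ((t * x 0) ^ 2 / 2) * ρ' ‖x‖ := by
    funext x
    simp only [gg]
    ring
  have hggint : Integrable (fun x : EuclideanSpace ℝ (Fin (n+1)) => gg (t * x 0) * ρ' ‖x‖) := by
    rw [hsplit]
    exact ((hK t).const_mul _).sub (hbound t)
  have hcrux := crux n t ht ρ' hρ'm hρ'0 hρ'anti hggint
  have heq : ∫ x : EuclideanSpace ℝ (Fin (n+1)), gg (t * x 0) * ρ' ‖x‖
      = Real.pi ^ 2 * (∫ x : EuclideanSpace ℝ (Fin (n+1)), (1 - Real.cos (t * x 0)) * ρ' ‖x‖)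
        - ∫ x : EuclideanSpace ℝ (Fin (n+1)), min 2 ((t * x 0) ^ 2 / 2) * ρ' ‖x‖ := by
    rw [hsplit, integral_sub ((hK t).const_mul _) (hbound t), integral_const_mul]
  rw [heq] at hcrux
  rw [hψ' t ht.le]
  linarith
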